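/- For every dynamic policy ↣ over signature (D, dom, A), there exists a local policy ↣' ≤ ↣ such that for all systems M over the signature, M is ta^□-secure with respect to ↣ if and only if M is ta^□-secure with respect to ↣'. Specifically, one may take α ⊨ u ↣' v iff β ⊨ u ↣ v for all β with β ∼ᵘⁿʷ_u α and β ∼ᵘⁿʷ_v α, where ∼ᵘⁿʷ are the unwinding relations of ↣. -/
import Mathlib


open Classical

/-- Binary trees over actions, values of the `ta` purge functions. -/
inductive TATree (A : Type) : Type where
  | eps : TATree A
  | node : TATree A → TATree A → A → TATree A

/-- Run a deterministic system along a trace (newest action at the head of the list). -/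
def runL {S A : Type} (step : S → A → S) (s0 : S) : List A → S
  | [] => s0
  | a :: α => step (runL step s0 α) a

/-- The permissive purge function `ta^◇` for a dynamic policy `P`. -/
noncomputable def taD {D A : Type} (dm : A → D) (P : List A → D → D → Prop) :
    List A → D → TATree A
  | [], _ => TATree.eps
  | a :: α, u =>
    if P α (dm a) u then TATree.node (taD dm P α u) (taD dm P α (dm a)) a
    else taD dm P α u

/-- The unwinding relations: smallest family of equivalence relations on traces
satisfying WSC and DLR with respect to the dynamic policy `P`. -/
inductive Unw {D A : Type} (dm : A → D) (P : List A → D → D → Prop) :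
    D → List A → List A → Prop where
  | refl (u : D) (α : List A) : Unw dm P u α α
  | symm {u : D} {α β : List A} : Unw dm P u α β → Unw dm P u β α
  | trans {u : D} {α β γ : List A} : Unw dm P u α β → Unw dm P u β γ → Unw dm P u α γ
  | dlr (u : D) (α : List A) (a : A) : ¬ P α (dm a) u → Unw dm P u (a :: α) α
  | wsc (u : D) {α β : List A} (a : A) :
      Unw dm P u α β → Unw dm P (dm a) α β → Unw dm P u (a :: α) (a :: β)

/-- The prohibitive purge function `ta^□`, whose condition is distributed knowledge
of the policy edge, interpreted over the Kripke structure given by the unwinding relations. -/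
noncomputable def taB {D A : Type} (dm : A → D) (P : List A → D → D → Prop) :
    List A → D → TATree A
  | [], _ => TATree.eps
  | a :: α, u =>
    if (∀ β, Unw dm P u α β → Unw dm P (dm a) α β → P β (dm a) u) then
      TATree.node (taB dm P α u) (taB dm P α (dm a)) a
    else taB dm P α u

section Aux
variable {D A : Type} (dm : A → D) (P : List A → D → D → Prop)

/-- The localized policy. -/
def Ploc : List A → D → D → Prop :=
  fun α u v => ∀ β, Unw dm P u α β → Unw dm P v α β → P β u v

lemma Ploc_le (α : List A) (u v : D) (h : Ploc dm P α u v) : P α u v :=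
  h α (Unw.refl u α) (Unw.refl v α)

lemma unw_mono {u : D} {α β : List A} (h : Unw dm P u α β) :
    Unw dm (Ploc dm P) u α β := by
  induction h with
  | refl u α => exact .refl u α
  | symm _ ih => exact ih.symm
  | trans _ _ ih1 ih2 => exact ih1.trans ih2
  | dlr u α a h => exact .dlr u α a (fun h' => h (Ploc_le dm P _ _ _ h'))
  | wsc u a _ _ ih1 ih2 => exact .wsc u a ih1 ih2

lemma unw_of_ploc {u : D} {α β : List A} (h : Unw dm (Ploc dm P) u α β) :
    Unw dm P u α β := by
  induction h with
  | refl u α => exact .refl u α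
  | symm _ ih => exact ih.symm
  | trans _ _ ih1 ih2 => exact ih1.trans ih2
  | dlr u α a h =>
      simp only [Ploc, not_forall] at h
      obtain ⟨β, h1, h2, h3⟩ := h
      exact ((Unw.wsc u a h2 h1).trans (Unw.dlr u β a h3)).trans h2.symm
  | wsc u a _ _ ih1 ih2 => exact .wsc u a ih1 ih2

lemma ploc_local {u v : D} {α β : List A} (h1 : Unw dm P u α β) (h2 : Unw dm P v α β) :
    Ploc dm P α u v ↔ Ploc dm P β u v :=
  ⟨fun h γ g1 g2 => h γ (h1.trans g1) (h2.trans g2),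
   fun h γ g1 g2 => h γ (h1.symm.trans g1) (h2.symm.trans g2)⟩

lemma unw_of_taD_eq :
    ∀ (α β : List A) (u : D), taD dm (Ploc dm P) α u = taD dm (Ploc dm P) β u →
      Unw dm (Ploc dm P) u α β := by
  intro α
  induction α with
  | nil =>
      intro β
      induction β with
      | nil => intro u _; exact .refl u []
      | cons b β' ih =>
          intro u h
          by_cases hq : Ploc dm P β' (dm b) u
          · rw [taD, taD, if_pos hq] at h; exact absurd h (by simp)
          · rw [show taD dm (Ploc dm P) (b :: β') u = taD dm (Ploc dm P) β' u from
                by rw [taD, if_neg hq]] at h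
            exact (ih u h).trans (Unw.dlr u β' b hq).symm
  | cons a α' ihα =>
      intro β
      induction β with
      | nil =>
          intro u h
          by_cases hp : Ploc dm P α' (dm a) u
          · rw [taD, taD, if_pos hp] at h; exact absurd h (by simp)
          · rw [show taD dm (Ploc dm P) (a :: α') u = taD dm (Ploc dm P) α' u from
                by rw [taD, if_neg hp]] at h
            exact (Unw.dlr u α' a hp).trans (ihα [] u h)
      | cons b β' ihβ =>
          intro u h
          by_cases hp : Ploc dm P α' (dm a) u
          · by_cases hq : Ploc dm P β' (dm b) u
            · rw [taD, taD, if_pos hp, if_pos hq] at h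
              injection h with h1 h2 h3
              subst h3
              exact Unw.wsc u a (ihα β' u h1) (ihα β' (dm a) h2)
            · rw [show taD dm (Ploc dm P) (b :: β') u = taD dm (Ploc dm P) β' u from
                by rw [taD, if_neg hq]] at h
              exact (ihβ u h).trans (Unw.dlr u β' b hq).symm
          · rw [show taD dm (Ploc dm P) (a :: α') u = taD dm (Ploc dm P) α' u from
                by rw [taD, if_neg hp]] at h
            exact (Unw.dlr u α' a hp).trans (ihα (b :: β') u h)

end Aux

/-- every policy admits a local, more restrictive policy that is equivalent
with respect to `ta^□`-security; specifically, `P' α u v` holds iff `P β u v` holds for all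
`β` unwinding-equivalent to `α` for both `u` and `v`. -/
theorem statement_9 {D A : Type} (dm : A → D) (P : List A → D → D → Prop)
    (hrefl : ∀ α u, P α u u) :
    ∃ P' : List A → D → D → Prop,
      (∀ (α : List A) u v, P' α u v ↔ ∀ β, Unw dm P u α β → Unw dm P v α β → P β u v) ∧
      (∀ (α : List A) u v, P' α u v → P α u v) ∧
      (∀ u v (α β : List A), taD dm P' α u = taD dm P' β u →
          taD dm P' α v = taD dm P' β v → (P' α u v ↔ P' β u v)) ∧
      (∀ (S O : Type) (step : S → A → S) (s0 : S) (obs : D → S → O),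
        (∀ u (α β : List A), Unw dm P u α β →
            obs u (runL step s0 α) = obs u (runL step s0 β)) ↔
        (∀ u (α β : List A), Unw dm P' u α β →
            obs u (runL step s0 α) = obs u (runL step s0 β))) := by
  refine ⟨Ploc dm P, fun α u v => Iff.rfl, Ploc_le dm P, ?_, ?_⟩
  · intro u v α β h1 h2
    exact ploc_local dm P (unw_of_ploc dm P (unw_of_taD_eq dm P α β u h1))
      (unw_of_ploc dm P (unw_of_taD_eq dm P α β v h2))
  · intro S O step s0 obs
    constructor
    · intro H u α β h; exact H u α β (unw_of_ploc dm P h)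
    · intro H u α β h; exact H u α β (unw_mono dm P h)
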